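/- Let f : ℝᵈ → ℝ be C² and semi-strongly self-concordant with constant L. Then for all x, y: ‖∇f(y) − ∇f(x) − ∇²f(x)(y−x)‖*_x ≤ (L/2)·‖y−x‖_x², where ‖g‖*_x = ⟨g, ∇²f(x)⁻¹ g⟩^{1/2} is the dual local norm (assuming ∇²f(x) positive definite). -/

import Mathlib

open RealInnerProductSpace

theorem gradient_approx_bound_semi_strong_self_concordant {d : ℕ}
    (f : EuclideanSpace ℝ (Fin d) → ℝ)
    (hess hessinv : EuclideanSpace ℝ (Fin d) →
      EuclideanSpace ℝ (Fin d) →L[ℝ] EuclideanSpace ℝ (Fin d))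
    (L : ℝ) (hL : 0 ≤ L)
    (hf : ContDiff ℝ 2 f)
    (hhess : ∀ x, HasFDerivAt (gradient f) (hess x) x)
    -- positive definiteness of the Hessians
    (hpd : ∀ x v, v ≠ 0 → 0 < ⟪hess x v, v⟫)
    -- hessinv x is the inverse of hess x
    (hinv : ∀ x, (hess x).comp (hessinv x) = ContinuousLinearMap.id ℝ _ ∧
      (hessinv x).comp (hess x) = ContinuousLinearMap.id ℝ _)
    -- semi-strong self-concordance (operator-norm form, as a bilinear bound)
    (hssc : ∀ x y u v, |⟪(hess y - hess x) u, v⟫| ≤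
      L * Real.sqrt ⟪hess x (y - x), y - x⟫ *
        (Real.sqrt ⟪hess x u, u⟫ * Real.sqrt ⟪hess x v, v⟫)) :
    ∀ x y,
      Real.sqrt ⟪gradient f y - gradient f x - hess x (y - x),
          hessinv x (gradient f y - gradient f x - hess x (y - x))⟫ ≤
        L / 2 * Real.sqrt ⟪hess x (y - x), y - x⟫ ^ 2 := by
  intro x y
  set u := y - x with hu
  set g := gradient f y - gradient f x - hess x u with hg
  set w := hessinv x g with hw
  have hxw : hess x w = g := ContinuousLinearMap.ext_iff.mp (hinv x).1 g
  have hnn : ∀ v, (0:ℝ) ≤ ⟪hess x v, v⟫ := by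
    intro v
    rcases eq_or_ne v 0 with h | h
    · simp [h]
    · exact (hpd x v h).le
  set a := Real.sqrt ⟪hess x u, u⟫ with ha
  set b := Real.sqrt ⟪hess x w, w⟫ with hb
  have ha0 : 0 ≤ a := Real.sqrt_nonneg _
  have hb0 : 0 ≤ b := Real.sqrt_nonneg _
  have hb2 : b ^ 2 = ⟪hess x w, w⟫ := Real.sq_sqrt (hnn w)
  have hgw : ⟪g, w⟫ = b ^ 2 := by rw [hb2, ← hxw]
  set c := L / 2 * a ^ 2 * b with hc
  have hc0 : 0 ≤ c := by positivity
  -- derivative setup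
  have hγ : ∀ t : ℝ, HasDerivAt (fun t : ℝ => x + t • u) u t := by
    intro t
    simpa using ((hasDerivAt_id t).smul_const u).const_add x
  have hG : ∀ t : ℝ, HasDerivAt (fun t : ℝ => gradient f (x + t • u)) (hess (x + t • u) u) t :=
    fun t => by have := (hhess (x + t • u)).comp_hasDerivAt t (hγ t); exact this
  have hφ : ∀ t : ℝ, HasDerivAt (fun t : ℝ => ⟪gradient f (x + t • u), w⟫)
      ⟪hess (x + t • u) u, w⟫ t := by
    intro t
    simpa using (hG t).inner ℝ (hasDerivAt_const t w)
  have hH : ∀ t : ℝ, HasDerivAt (fun t : ℝ => c * t ^ 2 + t * ⟪hess x u, w⟫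
      - ⟪gradient f (x + t • u), w⟫)
      (2 * c * t + ⟪hess x u, w⟫ - ⟪hess (x + t • u) u, w⟫) t := by
    intro t
    have h1 := (hasDerivAt_pow 2 t).const_mul c
    have h2 := (hasDerivAt_id t).mul_const (⟪hess x u, w⟫ : ℝ)
    have h3 := (h1.add h2).sub (hφ t)
    convert h3 using 1
    · rfl
    · rfl
    · rfl
    · simp only [Nat.cast_ofNat]; ring
  have hderiv_nonneg : ∀ t : ℝ, 0 ≤ t →
      0 ≤ 2 * c * t + ⟪hess x u, w⟫ - ⟪hess (x + t • u) u, w⟫ := by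
    intro t ht
    have hssc' := hssc x (x + t • u) u w
    have hdiff : (x + t • u) - x = t • u := by abel
    rw [hdiff] at hssc'
    have hsq : ⟪hess x (t • u), t • u⟫ = t ^ 2 * ⟪hess x u, u⟫ := by
      rw [map_smul, real_inner_smul_left, real_inner_smul_right]; ring
    have hsqrt : Real.sqrt ⟪hess x (t • u), t • u⟫ = t * a := by
      rw [hsq, Real.sqrt_mul (sq_nonneg t), Real.sqrt_sq ht, ha]
    rw [hsqrt] at hssc'
    have hinner : ⟪(hess (x + t • u) - hess x) u, w⟫
        = ⟪hess (x + t • u) u, w⟫ - ⟪hess x u, w⟫ := by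
      rw [ContinuousLinearMap.sub_apply, inner_sub_left]
    rw [hinner] at hssc'
    have hle := (abs_le.mp hssc').2
    have h2c : 2 * c * t = L * (t * a) * (a * b) := by rw [hc]; ring
    linarith
  have hmono : MonotoneOn (fun t : ℝ => c * t ^ 2 + t * ⟪hess x u, w⟫
      - ⟪gradient f (x + t • u), w⟫) (Set.Icc 0 1) := by
    apply monotoneOn_of_deriv_nonneg (convex_Icc 0 1)
    · exact fun t _ => (hH t).continuousAt.continuousWithinAt
    · exact fun t _ => (hH t).differentiableAt.differentiableWithinAt
    · intro t ht
      rw [(hH t).deriv]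
      exact hderiv_nonneg t (by
        rw [interior_Icc] at ht
        exact ht.1.le)
  have hmem0 : (0:ℝ) ∈ Set.Icc (0:ℝ) 1 := by norm_num
  have hmem1 : (1:ℝ) ∈ Set.Icc (0:ℝ) 1 := by norm_num
  have hkey := hmono hmem0 hmem1 zero_le_one
  simp only at hkey
  have hx0 : x + (0:ℝ) • u = x := by simp
  have hx1 : x + (1:ℝ) • u = y := by rw [one_smul, hu]; abel
  rw [hx0, hx1] at hkey
  -- hkey : 0 + 0 * ... - ⟪∇f x, w⟫ ≤ c * 1 + 1 * ⟪hess x u, w⟫ - ⟪∇f y, w⟫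
  have hgweq : ⟪g, w⟫ = ⟪gradient f y, w⟫ - ⟪gradient f x, w⟫ - ⟪hess x u, w⟫ := by
    rw [hg]; rw [inner_sub_left, inner_sub_left]
  have hbc : b ^ 2 ≤ c := by
    rw [← hgw, hgweq]; nlinarith [hkey]
  have hbb : b ≤ L / 2 * a ^ 2 := by
    rcases eq_or_lt_of_le hb0 with h | h
    · rw [← h]; positivity
    · rw [hc] at hbc; nlinarith
  rw [hgw, Real.sqrt_sq hb0]
  exact hbb
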